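/- Every Verma module M(λ) over D_q(sl₂) is simple, for every λ ∈ k \ {0} and q not a root of unity. Consequently D_q(sl₂) has no nonzero finite-dimensional representations. -/

import Mathlib

private lemma stmt16_geom_ne_zero {k : Type*} [Field k] {q : k}
    (hq : ∀ n : ℕ, 1 ≤ n → q ^ n ≠ 1) (m : ℕ) :
    (∑ i ∈ Finset.range (m + 1), (q ^ 2) ^ i) ≠ 0 := by
  intro h
  have h2 := geom_sum_mul (q ^ 2) (m + 1)
  rw [h, zero_mul] at h2
  have h3 : (q ^ 2) ^ (m + 1) = 1 := by
    have := h2.symm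
    rwa [sub_eq_zero] at this
  rw [← pow_mul] at h3
  exact hq (2 * (m + 1)) (by omega) h3

private lemma stmt16_EFpow {k B : Type*} [Field k] [Ring B] [Algebra k B]
    (q c : k) (E F Kinv : B)
    (hEF : E * F = F * E + c • Kinv)
    (hKiF : Kinv * F = (q ^ 2) • (F * Kinv)) :
    ∀ m : ℕ, E * F ^ (m + 1) = F ^ (m + 1) * E
      + (c * (∑ i ∈ Finset.range (m + 1), (q ^ 2) ^ i)) • (F ^ m * Kinv) := by
  intro m
  induction m with
  | zero => simpa using hEF
  | succ n ih =>
    have h1 : E * F ^ (n + 2) = (E * F ^ (n + 1)) * F := by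
      rw [mul_assoc, ← pow_succ]
    rw [h1, ih, add_mul, smul_mul_assoc, mul_assoc, mul_assoc, hEF, hKiF]
    simp only [mul_add, mul_smul_comm, smul_mul_assoc, smul_smul, ← mul_assoc,
      ← pow_succ, geom_sum_succ]
    module

private lemma stmt16_EpowF {k B : Type*} [Field k] [Ring B] [Algebra k B]
    (q c : k) (E F Kinv : B)
    (hEF : E * F = F * E + c • Kinv)
    (hEKi : E * Kinv = (q ^ 2) • (Kinv * E)) :
    ∀ m : ℕ, E ^ (m + 1) * F = F * E ^ (m + 1)
      + (c * (∑ i ∈ Finset.range (m + 1), (q ^ 2) ^ i)) • (Kinv * E ^ m) := by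
  intro m
  induction m with
  | zero => simpa using hEF
  | succ n ih =>
    have h1 : E ^ (n + 2) * F = E * (E ^ (n + 1) * F) := by
      rw [← mul_assoc, ← pow_succ']
    rw [h1, ih, mul_add, ← mul_assoc, hEF, mul_smul_comm, ← mul_assoc, hEKi]
    simp only [add_mul, mul_smul_comm, smul_mul_assoc, smul_smul, mul_assoc,
      ← pow_succ', geom_sum_succ]
    module

/-- Every Verma module `M(λ)` over `D_q(sl₂)` is simple, for every
`λ ≠ 0` and `q` not a root of unity; consequently `D_q(sl₂)` has no nonzero
finite-dimensional representations. -/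
theorem stmt_16 {k : Type*} [Field k] (q : k) (hq0 : q ≠ 0)
    (hq : ∀ n : ℕ, 1 ≤ n → q ^ n ≠ 1)
    {A : Type*} [Ring A] [Algebra k A] (E F K Kinv : A)
    (hK : K * Kinv = 1) (hK' : Kinv * K = 1)
    (hKE : K * E = (q ^ 2) • (E * K))
    (hKF : K * F = ((q ^ 2)⁻¹) • (F * K))
    (hEF : E * F - F * E = ((q⁻¹ - q)⁻¹) • Kinv) :
    -- (a) every Verma module `M(λ)` is simple:
    (∀ (V : Type*) [AddCommGroup V] [Module k V] [Module A V] [IsScalarTower k A V]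
        (lam : k), lam ≠ 0 → ∀ v : V,
        K • v = lam • v → E • v = (0 : V) →
        LinearIndependent k (fun m : ℕ => (F ^ m) • v) →
        Submodule.span k (Set.range fun m : ℕ => (F ^ m) • v) = ⊤ →
        ∀ p : Submodule A V, p = ⊥ ∨ p = ⊤) ∧
    -- (b) no nonzero finite-dimensional representations:
    (∀ (V : Type*) [AddCommGroup V] [Module k V],
        FiniteDimensional k V → Nontrivial V →
        IsEmpty (A →ₐ[k] Module.End k V)) := by
  -- common scalar facts
  set c : k := (q⁻¹ - q)⁻¹ with hc
  have hq2 : (q : k) ^ 2 ≠ 1 := hq 2 (by norm_num)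
  have hq2ne : (q : k) ^ 2 ≠ 0 := pow_ne_zero 2 hq0
  have hcne : c ≠ 0 := by
    apply inv_ne_zero
    intro h
    apply hq2
    have hqq : q⁻¹ = q := sub_eq_zero.mp h
    calc q ^ 2 = q * q := sq q
    _ = q * q⁻¹ := by rw [hqq]
    _ = 1 := mul_inv_cancel₀ hq0
  have hEF' : E * F = F * E + c • Kinv := by
    rw [← hEF]; abel
  -- `Kinv * F = q² • (F * Kinv)`
  have hKiF : Kinv * F = (q ^ 2) • (F * Kinv) := by
    have h1 : F * Kinv = (q ^ 2)⁻¹ • (Kinv * F) := by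
      calc F * Kinv = (Kinv * (K * F)) * Kinv := by
            rw [← mul_assoc, hK', one_mul]
      _ = (q ^ 2)⁻¹ • ((Kinv * F) * (K * Kinv)) := by
            rw [hKF, mul_smul_comm, smul_mul_assoc, mul_assoc, mul_assoc, mul_assoc]
      _ = (q ^ 2)⁻¹ • (Kinv * F) := by rw [hK, mul_one]
    rw [h1, smul_smul, mul_inv_cancel₀ hq2ne, one_smul]
  -- `E * Kinv = q² • (Kinv * E)`
  have hEKi : E * Kinv = (q ^ 2) • (Kinv * E) := by
    calc E * Kinv = (Kinv * (K * E)) * Kinv := by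
          rw [← mul_assoc, hK', one_mul]
    _ = (q ^ 2) • ((Kinv * E) * (K * Kinv)) := by
          rw [hKE, mul_smul_comm, smul_mul_assoc, mul_assoc, mul_assoc, mul_assoc]
    _ = (q ^ 2) • (Kinv * E) := by rw [hK, mul_one]
  constructor
  · -- part (a)
    intro V _ _ _ _ lam hlam v hKv hEv hli hspan p
    by_cases hpbot : p = ⊥
    · exact Or.inl hpbot
    right
    -- the commuting of the two scalar actions
    have hcomm : ∀ (a : A) (t : k) (x : V), a • (t • x) = t • (a • x) := by
      intro a t x
      rw [← IsScalarTower.algebraMap_smul A t x, ← mul_smul, ← Algebra.commutes,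
        mul_smul, IsScalarTower.algebraMap_smul]
    have hksmul : ∀ (t : k) (x : V), x ∈ p → t • x ∈ p := by
      intro t x hx
      rw [← IsScalarTower.algebraMap_smul A t x]
      exact p.smul_mem _ hx
    -- Kinv acts on v by lam⁻¹
    have hKiv : Kinv • v = lam⁻¹ • v := by
      have h1 : v = lam • (Kinv • v) := by
        calc v = (Kinv * K) • v := by rw [hK', one_smul]
        _ = Kinv • (K • v) := by rw [mul_smul]
        _ = lam • (Kinv • v) := by rw [hKv, hcomm]
      calc Kinv • v = lam⁻¹ • (lam • (Kinv • v)) := by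
            rw [smul_smul, inv_mul_cancel₀ hlam, one_smul]
      _ = lam⁻¹ • v := by rw [← h1]
    -- basis
    set Bf : ℕ → V := fun m => (F ^ m) • v with hBf
    let B : Module.Basis ℕ k V := Module.Basis.mk hli (by rw [hspan])
    have hB : ∀ m, B m = Bf m := fun m => Module.Basis.mk_apply hli _ m
    -- scalars for the E-action
    set t : ℕ → k := fun m => ∑ i ∈ Finset.range m, (q ^ 2) ^ i with ht
    set a : ℕ → k := fun m => c * t m * lam⁻¹ with ha
    have ha0 : a 0 = 0 := by simp [ha, ht]
    have hane : ∀ m : ℕ, a (m + 1) ≠ 0 := fun m =>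
      mul_ne_zero (mul_ne_zero hcne (stmt16_geom_ne_zero hq m)) (inv_ne_zero hlam)
    -- E action on basis vectors
    have hEB : ∀ m : ℕ, E • Bf m = a m • Bf (m - 1) := by
      intro m
      cases m with
      | zero => simp [hBf, ha0, hEv]
      | succ n =>
        have h1 : E • Bf (n + 1) = (E * F ^ (n + 1)) • v := by
          rw [hBf, mul_smul]
        have h2 : ((c * t (n + 1)) • (F ^ n * Kinv)) • v
            = (c * t (n + 1)) • ((F ^ n * Kinv) • v) := smul_assoc _ _ _
        rw [h1, stmt16_EFpow q c E F Kinv hEF' hKiF n, add_smul,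
          mul_smul (F ^ (n + 1)) E v, hEv, smul_zero, zero_add, h2,
          mul_smul (F ^ n) Kinv v, hKiv, hcomm, smul_smul, Nat.add_sub_cancel]
    -- E as a k-linear endomorphism
    let El : V →ₗ[k] V :=
      { toFun := fun x => E • x
        map_add' := fun x y => smul_add E x y
        map_smul' := fun tt x => hcomm E tt x }
    have hEBl : ∀ m : ℕ, El (B m) = a m • Bf (m - 1) := by
      intro m
      rw [hB]
      exact hEB m
    have hdec : ∀ w : V,
        El w = (B.repr w).sum fun m cm => (cm * a m) • Bf (m - 1) := by
      intro w
      conv_lhs => rw [← B.linearCombination_repr w]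
      rw [Finsupp.linearCombination_apply, map_finsuppSum]
      refine Finsupp.sum_congr fun m _ => ?_
      rw [map_smul, hEBl, smul_smul]
    have hrepr : ∀ (w : V) (j : ℕ), B.repr (El w) j
        = (B.repr w).sum fun m cm => (cm * a m) * Finsupp.single (m - 1) (1 : k) j := by
      intro w j
      rw [hdec, map_finsuppSum, Finsupp.sum_apply]
      refine Finsupp.sum_congr fun m _ => ?_
      rw [map_smul, ← hB, B.repr_self, Finsupp.smul_apply, smul_eq_mul]
    -- the base case: elements supported in degree 0
    have hbase : ∀ w : V, w ∈ p → w ≠ 0 →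
        (∀ m : ℕ, 0 < m → B.repr w m = 0) → v ∈ p := by
      intro w hwp hw0 hsupp
      have hr : B.repr w = Finsupp.single 0 (B.repr w 0) := by
        ext m
        cases m with
        | zero => simp
        | succ m =>
          rw [hsupp (m + 1) (Nat.succ_pos m),
            Finsupp.single_eq_of_ne (by omega : m + 1 ≠ (0 : ℕ))]
      have hw : w = (B.repr w 0) • v := by
        conv_lhs => rw [← B.linearCombination_repr w, hr]
        rw [Finsupp.linearCombination_single, hB]
        simp [hBf]
      have hc0 : B.repr w 0 ≠ 0 := by
        intro h
        exact hw0 (by rw [hw, h, zero_smul])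
      have hv : v = (B.repr w 0)⁻¹ • w := by
        have h5 : (B.repr w 0)⁻¹ • w = (B.repr w 0)⁻¹ • (B.repr w 0 • v) := by
          rw [← hw]
        rw [h5, smul_smul, inv_mul_cancel₀ hc0, one_smul]
      rw [hv]
      exact hksmul _ _ hwp
    -- the main induction
    have key : ∀ N : ℕ, ∀ w : V, w ∈ p → w ≠ 0 →
        (∀ m : ℕ, N < m → B.repr w m = 0) → v ∈ p := by
      intro N
      induction N with
      | zero => exact fun w hwp hw0 hs => hbase w hwp hw0 fun m hm => hs m hm
      | succ N ih =>
        intro w hwp hw0 hsupp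
        by_cases h0 : El w = 0
        · -- all higher coefficients of w vanish
          apply hbase w hwp hw0
          intro m hm
          obtain ⟨j, rfl⟩ : ∃ j, m = j + 1 := ⟨m - 1, by omega⟩
          have h1 : (0 : k) = B.repr (El w) j := by rw [h0, map_zero]; rfl
          rw [hrepr w j, Finsupp.sum] at h1
          have hterm : ∀ b ∈ (B.repr w).support, b ≠ j + 1 →
              (B.repr w b * a b) * Finsupp.single (b - 1) (1 : k) j = 0 := by
            intro b _ hbne
            cases b with
            | zero => rw [ha0, mul_zero, zero_mul]
            | succ b' =>
              rw [Nat.add_sub_cancel,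
                Finsupp.single_eq_of_ne (by omega : j ≠ b'), mul_zero]
          by_cases hjs : j + 1 ∈ (B.repr w).support
          · have h2 := Finset.sum_eq_single_of_mem (j + 1) hjs hterm
            rw [h2, Nat.add_sub_cancel, Finsupp.single_eq_same, mul_one] at h1
            rcases mul_eq_zero.mp h1.symm with h | h
            · exact h
            · exact absurd h (hane j)
          · exact Finsupp.notMem_support_iff.mp hjs
        · -- apply the inductive hypothesis to `E • w`
          have hmem : El w ∈ p := p.smul_mem E hwp
          refine ih (El w) hmem h0 ?_
          intro m hm
          rw [hrepr w m, Finsupp.sum]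
          apply Finset.sum_eq_zero
          intro b hb
          have hble : b ≤ N + 1 := by
            by_contra hbg
            exact (Finsupp.mem_support_iff.mp hb) (hsupp b (by omega))
          rw [Finsupp.single_eq_of_ne (by omega : m ≠ b - 1), mul_zero]
    -- conclude
    obtain ⟨w, hwp, hw0⟩ := (Submodule.ne_bot_iff p).mp hpbot
    have hvp : v ∈ p := by
      refine key ((B.repr w).support.sup id) w hwp hw0 ?_
      intro m hm
      rw [← Finsupp.notMem_support_iff]
      intro hmem
      have h3 := Finset.le_sup (f := id) hmem
      simp only [id] at h3
      omega
    apply Submodule.eq_top_iff'.mpr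
    intro x
    have hx : x ∈ Submodule.span k (Set.range Bf) := by rw [hspan]; trivial
    have hle : Submodule.span k (Set.range Bf) ≤ p.restrictScalars k := by
      rw [Submodule.span_le]
      rintro y ⟨m, rfl⟩
      exact p.smul_mem (F ^ m) hvp
    exact hle hx
  · -- part (b)
    intro V _ _ hfd hnt
    constructor
    intro φ
    classical
    set e : Module.End k V := φ E with he
    set f : Module.End k V := φ F with hf
    set kk : Module.End k V := φ K with hkk'
    set ki : Module.End k V := φ Kinv with hki'
    have hkki : kk * ki = 1 := by rw [hkk', hki', ← map_mul, hK, map_one]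
    have hkik : ki * kk = 1 := by rw [hkk', hki', ← map_mul, hK', map_one]
    have hke : kk * e = (q ^ 2) • (e * kk) := by
      rw [hkk', he, ← map_mul, hKE, map_smul, map_mul]
    have hefi : e * f = f * e + c • ki := by
      have h2 := congrArg φ hEF
      rw [map_sub, map_smul, map_mul, map_mul] at h2
      rw [he, hf, hki', ← sub_eq_iff_eq_add']
      exact h2
    have heki : e * ki = (q ^ 2) • (ki * e) := by
      rw [he, hki', ← map_mul, hEKi, map_smul, map_mul]
    -- powers of e are eigenvectors of conjugation by kk
    have hkem : ∀ m : ℕ, kk * e ^ m = (q ^ (2 * m)) • (e ^ m * kk) := by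
      intro m
      induction m with
      | zero => simp
      | succ n ih =>
        calc kk * e ^ (n + 1) = (kk * e ^ n) * e := by rw [mul_assoc, ← pow_succ]
        _ = (q ^ (2 * n)) • (e ^ n * (kk * e)) := by
              rw [ih, smul_mul_assoc, mul_assoc]
        _ = (q ^ (2 * n)) • (e ^ n * ((q ^ 2) • (e * kk))) := by rw [hke]
        _ = (q ^ (2 * (n + 1))) • (e ^ (n + 1) * kk) := by
              rw [mul_smul_comm, smul_smul, ← mul_assoc, ← pow_succ, ← pow_add]
              ring_nf
    have hone : (1 : Module.End k V) ≠ 0 := by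
      obtain ⟨x, hx⟩ := exists_ne (0 : V)
      intro h
      apply hx
      calc x = (1 : Module.End k V) x := rfl
      _ = (0 : Module.End k V) x := by rw [h]
      _ = 0 := rfl
    -- e is nilpotent
    have hnil : ∃ m : ℕ, e ^ m = 0 := by
      by_contra hcon
      push_neg at hcon
      set Φ : Module.End k (Module.End k V) :=
        LinearMap.mulLeft k kk ∘ₗ LinearMap.mulRight k ki with hΦ
      have heig : ∀ m : ℕ, Φ.HasEigenvector (q ^ (2 * m)) (e ^ m) := by
        intro m
        constructor
        · rw [Module.End.mem_eigenspace_iff]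
          show kk * (e ^ m * ki) = _
          rw [← mul_assoc, hkem, smul_mul_assoc, mul_assoc, hkki, mul_one]
        · exact hcon m
      have hinj : Function.Injective fun m : ℕ => (q : k) ^ (2 * m) := by
        have key : ∀ s r : ℕ, s ≤ r → (q : k) ^ (2 * s) = q ^ (2 * r) → s = r := by
          intro s r hsr h
          by_contra hne
          have h2 : (q : k) ^ (2 * s) * q ^ (2 * (r - s)) = q ^ (2 * s) * 1 := by
            rw [mul_one, ← pow_add, h]
            congr 1
            omega
          exact hq (2 * (r - s)) (by omega) (mul_left_cancel₀ (pow_ne_zero _ hq0) h2)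
        intro s r h
        rcases le_total s r with hsr | hsr
        · exact key s r hsr h
        · exact (key r s hsr h.symm).symm
      have hliE : LinearIndependent k fun m : ℕ => e ^ m :=
        Φ.eigenvectors_linearIndependent' (fun m : ℕ => q ^ (2 * m)) hinj _ heig
      exact Module.Finite.not_linearIndependent_of_infinite _ hliE
    -- take the minimal m with e^m = 0
    have hm0 : e ^ (Nat.find hnil) = 0 := Nat.find_spec hnil
    have hmpos : 1 ≤ Nat.find hnil := by
      rcases Nat.eq_zero_or_pos (Nat.find hnil) with h | h
      · exfalso; apply hone; rw [← pow_zero e, ← h]; exact hm0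
      · exact h
    obtain ⟨n, hn⟩ : ∃ n, Nat.find hnil = n + 1 := ⟨Nat.find hnil - 1, by omega⟩
    rw [hn] at hm0
    have hrel := stmt16_EpowF q c e f ki hefi heki n
    rw [hm0, zero_mul, mul_zero, zero_add] at hrel
    have hct : c * (∑ i ∈ Finset.range (n + 1), ((q : k) ^ 2) ^ i) ≠ 0 :=
      mul_ne_zero hcne (stmt16_geom_ne_zero hq n)
    have hz : ki * e ^ n = 0 := by
      calc ki * e ^ n
          = (c * (∑ i ∈ Finset.range (n + 1), ((q : k) ^ 2) ^ i))⁻¹ •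
            ((c * (∑ i ∈ Finset.range (n + 1), ((q : k) ^ 2) ^ i)) • (ki * e ^ n)) := by
            rw [smul_smul, inv_mul_cancel₀ hct, one_smul]
      _ = 0 := by rw [← hrel, smul_zero]
    have hen : e ^ n = 0 := by
      calc e ^ n = (kk * ki) * e ^ n := by rw [hkki, one_mul]
      _ = kk * (ki * e ^ n) := by rw [mul_assoc]
      _ = 0 := by rw [hz, mul_zero]
    exact absurd hen (Nat.find_min hnil (by omega))
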